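/- Let f : ℝⁿ → ℝ be a signed distance function to a closed set with boundary Z = f⁻¹({0}): f differentiable everywhere, ‖∇f(x)‖ = 1 for all x, and |f(x)| = infDist x Z. For q with f(q) > 0 (outside) and nearest point p' ∈ Z, the gradient satisfies ∇f(q) = (q - p')/‖q - p'‖; for q with f(q) < 0 (inside), ∇f(q) = -(q - p')/‖q - p'‖. In both cases ∇f(q) and ∇f(p') (if the latter is taken as the limit direction, i.e., assuming ∇f(p') = ±(q - p')/‖q - p'‖ by continuity of ∇f along the segment) are parallel. -/

import Mathlib

open InnerProductSpace Metric Set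

lemma grad_norm_fderiv {n : ℕ} (f : EuclideanSpace ℝ (Fin n) → ℝ) (x : EuclideanSpace ℝ (Fin n)) :
    ‖fderiv ℝ f x‖ = ‖gradient f x‖ :=
  ((toDual ℝ (EuclideanSpace ℝ (Fin n))).symm.norm_map (fderiv ℝ f x)).symm

lemma key_pos {n : ℕ} (f : EuclideanSpace ℝ (Fin n) → ℝ)
    (hdiff : Differentiable ℝ f)
    (heik : ∀ x, ‖gradient f x‖ = 1)
    (Z : Set (EuclideanSpace ℝ (Fin n)))
    (hsd : ∀ x, |f x| = Metric.infDist x Z)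
    (q p' : EuclideanSpace ℝ (Fin n)) (hp' : p' ∈ Z)
    (hnear : ‖q - p'‖ = Metric.infDist q Z)
    (hpos : 0 < f q) :
    gradient f q = ‖q - p'‖⁻¹ • (q - p') := by
  set d : ℝ := ‖q - p'‖ with hd_def
  have hfq : f q = d := by
    rw [hnear, ← hsd q]; exact (abs_of_pos hpos).symm
  have hd : 0 < d := hfq ▸ hpos
  have hlip : LipschitzWith 1 f := by
    apply lipschitzWith_of_nnnorm_fderiv_le hdiff
    intro x
    rw [← NNReal.coe_le_coe, coe_nnnorm, NNReal.coe_one, grad_norm_fderiv, heik x]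
  have hlip' : ∀ a b : EuclideanSpace ℝ (Fin n), |f a - f b| ≤ ‖a - b‖ := by
    intro a b
    have := hlip.dist_le_mul a b
    rwa [Real.dist_eq, dist_eq_norm, NNReal.coe_one, one_mul] at this
  have heq : ∀ t ∈ Icc (0:ℝ) 1, f (q + t • (p' - q)) = (1 - t) * d := by
    intro t ht
    set x := q + t • (p' - q) with hx
    have hxp : x - p' = (1 - t) • (q - p') := by rw [hx]; module
    have hqx : q - x = t • (q - p') := by rw [hx]; module
    have hupper : f x ≤ (1 - t) * d := by
      calc f x ≤ |f x| := le_abs_self _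
        _ = infDist x Z := hsd x
        _ ≤ dist x p' := infDist_le_dist_of_mem hp'
        _ = ‖x - p'‖ := dist_eq_norm _ _
        _ = (1 - t) * d := by
            rw [hxp, norm_smul, Real.norm_eq_abs, abs_of_nonneg (by linarith [ht.2])]
    have hlower : (1 - t) * d ≤ f x := by
      have h1 : f q - f x ≤ t * d := by
        calc f q - f x ≤ |f q - f x| := le_abs_self _
          _ ≤ ‖q - x‖ := hlip' q x
          _ = t * d := by
              rw [hqx, norm_smul, Real.norm_eq_abs, abs_of_nonneg ht.1]
      nlinarith [hfq]
    linarith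
  -- derivative of ψ at 0
  have hγ : HasDerivAt (fun t : ℝ => q + t • (p' - q)) (p' - q) 0 := by
    simpa using ((hasDerivAt_id (0:ℝ)).smul_const (p' - q)).const_add q
  have hγ0 : q + (0:ℝ) • (p' - q) = q := by simp
  have hF : HasFDerivAt f (toDual ℝ _ (gradient f q)) (q + (0:ℝ) • (p' - q)) := by
    rw [hγ0]; exact (hdiff q).hasGradientAt.hasFDerivAt
  have hψ : HasDerivAt (fun t : ℝ => f (q + t • (p' - q)))
      ((toDual ℝ _ (gradient f q)) (p' - q)) 0 := hF.comp_hasDerivAt 0 hγ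
  have hlin : HasDerivWithinAt (fun t : ℝ => (1 - t) * d) (-d) (Icc (0:ℝ) 1) 0 := by
    have : HasDerivAt (fun t : ℝ => (1 - t) * d) ((-1) * d) 0 :=
      (((hasDerivAt_id (0:ℝ)).const_sub 1).mul_const d)
    simpa using this.hasDerivWithinAt
  have hψ' : HasDerivWithinAt (fun t : ℝ => f (q + t • (p' - q))) (-d) (Icc (0:ℝ) 1) 0 :=
    hlin.congr (fun t ht => heq t ht) (heq 0 ⟨le_refl 0, zero_le_one⟩)
  have huniq := UniqueDiffWithinAt.eq_deriv (Icc (0:ℝ) 1)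
    (uniqueDiffOn_Icc_zero_one 0 ⟨le_refl 0, zero_le_one⟩) hψ.hasDerivWithinAt hψ'
  rw [toDual_apply_apply] at huniq
  have hinner : (inner ℝ (gradient f q) (q - p') : ℝ) = ‖gradient f q‖ * ‖q - p'‖ := by
    rw [heik, one_mul, show q - p' = -(p' - q) by abel, inner_neg_right, huniq, neg_neg, norm_neg]
    exact norm_sub_rev q p'
  have := inner_eq_norm_mul_iff_real.mp hinner
  rw [heik, one_smul] at this
  rw [← this, smul_smul, inv_mul_cancel₀ hd.ne', one_smul]

lemma gradient_neg' {n : ℕ} (f : EuclideanSpace ℝ (Fin n) → ℝ)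
    (hdiff : Differentiable ℝ f) (x : EuclideanSpace ℝ (Fin n)) :
    gradient (fun y => -f y) x = -gradient f x := by
  have h2 : HasFDerivAt (fun y => -f y) (-(toDual ℝ _ (gradient f x))) x :=
    (hdiff x).hasGradientAt.hasFDerivAt.neg
  have := h2.hasGradientAt
  rw [this.gradient, map_neg, LinearIsometryEquiv.symm_apply_apply]

/-- For a signed distance function `f` to `Z = f⁻¹({0})` (differentiable, unit gradient,
`|f|` equal to the distance to `Z`) and `q ∉ Z` with nearest point `p' ∈ Z`:
if `f q > 0` then `∇f(q) = (q - p')/‖q - p'‖`; if `f q < 0` then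
`∇f(q) = -(q - p')/‖q - p'‖`; and if `∇f(p') = ±(q - p')/‖q - p'‖`, then `∇f(p')` is
parallel to `∇f(q)`. -/
theorem stmt_14 {n : ℕ} (f : EuclideanSpace ℝ (Fin n) → ℝ)
    (hdiff : Differentiable ℝ f)
    (heik : ∀ x, ‖gradient f x‖ = 1)
    (Z : Set (EuclideanSpace ℝ (Fin n))) (hZ : Z = f ⁻¹' {0})
    (hsd : ∀ x, |f x| = Metric.infDist x Z)
    (q p' : EuclideanSpace ℝ (Fin n)) (hq : q ∉ Z) (hp' : p' ∈ Z)
    (hnear : ‖q - p'‖ = Metric.infDist q Z) :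
    (0 < f q → gradient f q = ‖q - p'‖⁻¹ • (q - p')) ∧
    (f q < 0 → gradient f q = -(‖q - p'‖⁻¹ • (q - p'))) ∧
    ((gradient f p' = ‖q - p'‖⁻¹ • (q - p') ∨
        gradient f p' = -(‖q - p'‖⁻¹ • (q - p'))) →
      ∃ c : ℝ, gradient f p' = c • gradient f q) := by
  have hposcase : 0 < f q → gradient f q = ‖q - p'‖⁻¹ • (q - p') :=
    fun h => key_pos f hdiff heik Z hsd q p' hp' hnear h
  have hnegcase : f q < 0 → gradient f q = -(‖q - p'‖⁻¹ • (q - p')) := by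
    intro h
    have hres := key_pos (fun y => -f y) hdiff.neg
      (fun x => by rw [gradient_neg' f hdiff, norm_neg, heik]) Z
      (fun x => by rw [abs_neg, hsd]) q p' hp' hnear (by simpa using h)
    rw [gradient_neg' f hdiff] at hres
    exact neg_eq_iff_eq_neg.mp hres
  refine ⟨hposcase, hnegcase, ?_⟩
  intro hcase
  have hfne : f q ≠ 0 := by rw [hZ] at hq; simpa using hq
  rcases hfne.lt_or_gt with hneg | hpos
  · rcases hcase with h | h
    · exact ⟨-1, by rw [h, hnegcase hneg]; simp⟩
    · exact ⟨1, by rw [h, hnegcase hneg]; simp⟩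
  · rcases hcase with h | h
    · exact ⟨1, by rw [h, hposcase hpos]; simp⟩
    · exact ⟨-1, by rw [h, hposcase hpos]; simp⟩
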